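/- Let Π be a program over atoms indexed by natural numbers consisting of: the fact even(0), and for each natural number n the rule even(n+2) ← even(n), and the rule 'q ← min{X : even(X)} = 0' whose aggregate reduct w.r.t. S is: if the minimum of {n : even(n) ∈ S} does not exist or is nonzero, delete the rule; otherwise replace the body by {even(n) : even(n) ∈ S} (possibly infinite). Then S = {q} ∪ {even(2k) : k ∈ ℕ} is an answer set of Π (i.e., S equals the least model of its reduct), and it is the only answer set. -/
import Mathlib


/-- Models and least models of ground definite programs (bodies may be infinite). -/
def IsModel {α : Type*} (P : Set (α × Set α)) (A : Set α) : Prop :=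
  ∀ r ∈ P, r.2 ⊆ A → r.1 ∈ A

def IsLeastModel {α : Type*} (P : Set (α × Set α)) (A : Set α) : Prop :=
  IsModel P A ∧ ∀ M : Set α, IsModel P M → A ⊆ M

/-- Atoms: `none` = q, `some n` = even(n).  Aggregate reduct of the program
`{even(0)., even(n+2) ← even(n) (n ∈ ℕ), q ← min{X : even(X)} = 0}` w.r.t. S:
the q-rule is deleted unless the minimum of {n : even(n) ∈ S} exists and is 0,
in which case its body becomes {even(n) : even(n) ∈ S}. -/
def reduct (S : Set (Option ℕ)) : Set (Option ℕ × Set (Option ℕ)) :=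
  {r | r = (some 0, (∅ : Set (Option ℕ)))} ∪
  {r | ∃ n : ℕ, r = (some (n + 2), {some n})} ∪
  {r | IsLeast {n : ℕ | some n ∈ S} 0 ∧
       r = (none, {a : Option ℕ | ∃ n : ℕ, some n ∈ S ∧ a = some n})}

def AnswerSet (S : Set (Option ℕ)) : Prop := IsLeastModel (reduct S) S

def S₀ : Set (Option ℕ) := {none} ∪ {a : Option ℕ | ∃ k : ℕ, a = some (2 * k)}

lemma evens_mem (S M : Set (Option ℕ)) (hM : IsModel (reduct S) M) :
    ∀ k : ℕ, some (2 * k) ∈ M := by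
  intro k
  induction k with
  | zero =>
      have := hM (some 0, (∅ : Set (Option ℕ))) (Or.inl (Or.inl rfl))
        (by intro a ha; exact absurd ha (Set.notMem_empty a))
      simpa using this
  | succ k ih =>
      have h := hM (some (2 * k + 2), {some (2 * k)})
        (Or.inl (Or.inr ⟨2 * k, rfl⟩))
        (by intro a ha; rw [Set.mem_singleton_iff] at ha; subst ha; exact ih)
      have : 2 * (k + 1) = 2 * k + 2 := by ring
      rw [this]; exact h

lemma S₀_model (S : Set (Option ℕ)) : IsModel (reduct S) S₀ := by
  intro r hr
  simp only [reduct, Set.mem_union, Set.mem_setOf_eq] at hr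
  rcases hr with (h | h) | h
  · subst h
    intro _; exact Or.inr ⟨0, by norm_num⟩
  · obtain ⟨n, rfl⟩ := h
    intro hb
    have hn : some n ∈ S₀ := hb (Set.mem_singleton _)
    simp only [S₀, Set.mem_union, Set.mem_singleton_iff, Set.mem_setOf_eq] at hn
    rcases hn with h | ⟨k, hk⟩
    · exact absurd h (by simp)
    · have : n = 2 * k := by injection hk
      subst this
      exact Or.inr ⟨k + 1, by ring_nf⟩
  · obtain ⟨_, rfl⟩ := h
    intro _; exact Or.inl rfl

theorem evens_q_unique_answer_set :
    AnswerSet S₀ ∧ ∀ S : Set (Option ℕ), AnswerSet S → S = S₀ := by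
  have hleast : IsLeast {n : ℕ | some n ∈ S₀} 0 :=
    ⟨Or.inr ⟨0, by norm_num⟩, fun n _ => Nat.zero_le n⟩
  constructor
  · refine ⟨S₀_model S₀, ?_⟩
    intro M hM
    rintro a (rfl | ⟨k, rfl⟩)
    · -- q via the q-rule
      refine hM (none, {a : Option ℕ | ∃ n : ℕ, some n ∈ S₀ ∧ a = some n})
        (Or.inr ⟨hleast, rfl⟩) ?_
      rintro a ⟨n, hn, rfl⟩
      simp only [S₀, Set.mem_union, Set.mem_singleton_iff, Set.mem_setOf_eq] at hn
      rcases hn with h | ⟨k, hk⟩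
      · exact absurd h (by simp)
      · have : n = 2 * k := by injection hk
        subst this; exact evens_mem S₀ M hM k
    · exact evens_mem S₀ M hM k
  · intro S hS
    obtain ⟨hmod, hle⟩ := hS
    have hev : ∀ k : ℕ, some (2 * k) ∈ S := evens_mem S S hmod
    have hL : IsLeast {n : ℕ | some n ∈ S} 0 :=
      ⟨by simpa using hev 0, fun n _ => Nat.zero_le n⟩
    have hq : none ∈ S := by
      refine hmod (none, {a : Option ℕ | ∃ n : ℕ, some n ∈ S ∧ a = some n})
        (Or.inr ⟨hL, rfl⟩) ?_
      rintro a ⟨n, hn, rfl⟩; exact hn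
    apply Set.Subset.antisymm
    · exact hle S₀ (S₀_model S)
    · rintro a (rfl | ⟨k, rfl⟩)
      · exact hq
      · exact hev k
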